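/- Let Ω be the open unit disk in ℝ² ≅ ℂ and let γ ∈ L²(Ω). For all integers i, j ≥ 1: ∫_Ω γ(z) ⟨∇Re(z^i), ∇Im(z^j)⟩ dz = i·j·π·sign(j−i) ∫₀¹ r^{i+j−1} b_{|i−j|}(r) dr, where sign is the sign function with sign(0) = 0. -/

import Mathlib

open MeasureTheory Real Filter
open scoped RealInnerProductSpace

/-- Angular Fourier sine coefficient `b_k(r)` of a function `γ` on the unit disk:
`b_0 = 0` and for `k ≥ 1`, `b_k(r) = (1/π) ∫₀^{2π} γ(r e^{iφ}) sin(kφ) dφ`. -/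
noncomputable def fourierSinCoeff (γ : ℂ → ℝ) (k : ℕ) (r : ℝ) : ℝ :=
  if k = 0 then 0
  else
    (1 / π) * ∫ φ in (0:ℝ)..(2 * π),
      γ ((r : ℂ) * Complex.exp (Complex.I * (φ : ℂ))) * Real.sin (k * φ)

namespace LinearizedDtNAux

/-! ### Gradient computations -/

lemma hasGradientAt_re_pow (n : ℕ) (z : ℂ) :
    HasGradientAt (fun w : ℂ => (w ^ n).re)
      ((starRingEnd ℂ) ((n : ℂ) * z ^ (n - 1))) z := by
  have hd : HasFDerivAt (fun w : ℂ => w ^ n)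
      (ContinuousLinearMap.smulRight (1 : ℂ →L[ℂ] ℂ) ((n : ℂ) * z ^ (n - 1))) z :=
    (hasDerivAt_pow n z).hasFDerivAt
  have h2 : HasFDerivAt (fun w : ℂ => (w ^ n).re)
      (Complex.reCLM.comp ((ContinuousLinearMap.smulRight (1 : ℂ →L[ℂ] ℂ)
        ((n : ℂ) * z ^ (n - 1))).restrictScalars ℝ)) z :=
    Complex.reCLM.hasFDerivAt.comp z (hd.restrictScalars ℝ)
  have key : (InnerProductSpace.toDual ℝ ℂ) ((starRingEnd ℂ) ((n : ℂ) * z ^ (n - 1)))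
      = Complex.reCLM.comp ((ContinuousLinearMap.smulRight (1 : ℂ →L[ℂ] ℂ)
        ((n : ℂ) * z ^ (n - 1))).restrictScalars ℝ) := by
    ext v
    simp [InnerProductSpace.toDual_apply_apply, Complex.inner, Complex.mul_re]
  show HasFDerivAt _ _ _
  rw [key]
  exact h2

lemma hasGradientAt_im_pow (n : ℕ) (z : ℂ) :
    HasGradientAt (fun w : ℂ => (w ^ n).im)
      (Complex.I * (starRingEnd ℂ) ((n : ℂ) * z ^ (n - 1))) z := by
  have hd : HasFDerivAt (fun w : ℂ => w ^ n)
      (ContinuousLinearMap.smulRight (1 : ℂ →L[ℂ] ℂ) ((n : ℂ) * z ^ (n - 1))) z :=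
    (hasDerivAt_pow n z).hasFDerivAt
  have h2 : HasFDerivAt (fun w : ℂ => (w ^ n).im)
      (Complex.imCLM.comp ((ContinuousLinearMap.smulRight (1 : ℂ →L[ℂ] ℂ)
        ((n : ℂ) * z ^ (n - 1))).restrictScalars ℝ)) z :=
    Complex.imCLM.hasFDerivAt.comp z (hd.restrictScalars ℝ)
  have key : (InnerProductSpace.toDual ℝ ℂ) (Complex.I * (starRingEnd ℂ) ((n : ℂ) * z ^ (n - 1)))
      = Complex.imCLM.comp ((ContinuousLinearMap.smulRight (1 : ℂ →L[ℂ] ℂ)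
        ((n : ℂ) * z ^ (n - 1))).restrictScalars ℝ) := by
    ext v
    simp [InnerProductSpace.toDual_apply_apply, Complex.inner, Complex.mul_re, Complex.mul_im]
    ring
  show HasFDerivAt _ _ _
  rw [key]
  exact h2

lemma inner_conj_formula (i j : ℕ) (a b : ℂ) :
    ⟪(starRingEnd ℂ) ((i : ℂ) * a), Complex.I * (starRingEnd ℂ) ((j : ℂ) * b)⟫
      = (i : ℝ) * j * ((starRingEnd ℂ) a * b).im := by
  simp [Complex.inner, Complex.mul_re, Complex.mul_im]
  ring

/-- The weight function `⟨∇Re z^i, ∇Im z^j⟩`. -/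
noncomputable def W (i j : ℕ) (z : ℂ) : ℝ :=
  (i : ℝ) * j * (((starRingEnd ℂ) z) ^ (i - 1) * z ^ (j - 1)).im

lemma grad_inner_eq (i j : ℕ) (z : ℂ) :
    ⟪gradient (fun w : ℂ => (w ^ i).re) z, gradient (fun w : ℂ => (w ^ j).im) z⟫
      = W i j z := by
  rw [(hasGradientAt_re_pow i z).gradient, (hasGradientAt_im_pow j z).gradient]
  rw [W, ← map_pow]
  exact inner_conj_formula i j (z ^ (i - 1)) (z ^ (j - 1))

/-! ### Polar coordinates -/

lemma symm_mem_ball {p : ℝ × ℝ} (hp : p ∈ Set.Ioo (0:ℝ) 1 ×ˢ Set.Ioo (-π) π) :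
    Complex.polarCoord.symm p ∈ Metric.ball (0:ℂ) 1 := by
  have : ‖Complex.polarCoord.symm p‖ = |p.1| := Complex.norm_polarCoord_symm p
  simp only [Metric.mem_ball, Complex.dist_eq, sub_zero]
  rw [this, abs_of_pos hp.1.1]
  exact hp.1.2

lemma S_subset_target : (Set.Ioo (0:ℝ) 1 ×ˢ Set.Ioo (-π) π) ⊆ polarCoord.target := by
  rw [polarCoord_target]
  exact Set.prod_mono (Set.Ioo_subset_Ioi_self) le_rfl

lemma polar_ball_integral (g : ℂ → ℝ) :
    ∫ z in Metric.ball (0:ℂ) 1, g z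
      = ∫ p in (Set.Ioo (0:ℝ) 1 ×ˢ Set.Ioo (-π) π),
          p.1 * g (Complex.polarCoord.symm p) := by
  have h0 : ∫ z in Metric.ball (0:ℂ) 1, g z
      = ∫ z, (Metric.ball (0:ℂ) 1).indicator g z := by
    rw [integral_indicator Metric.isOpen_ball.measurableSet]
  rw [h0, ← Complex.integral_comp_polarCoord_symm]
  have h1 : ∀ p ∈ polarCoord.target,
      p.1 • (Metric.ball (0:ℂ) 1).indicator g (Complex.polarCoord.symm p)
      = (Set.Ioo (0:ℝ) 1 ×ˢ Set.Ioo (-π) π).indicator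
          (fun p => p.1 * g (Complex.polarCoord.symm p)) p := by
    rintro ⟨r, φ⟩ hp
    rw [polarCoord_target] at hp
    by_cases hr : r < 1
    · have hmem : ((r, φ) : ℝ × ℝ) ∈ Set.Ioo (0:ℝ) 1 ×ˢ Set.Ioo (-π) π :=
        ⟨⟨hp.1, hr⟩, hp.2⟩
      rw [Set.indicator_of_mem hmem, Set.indicator_of_mem (symm_mem_ball hmem)]
      rfl
    · have hnm : ((r, φ) : ℝ × ℝ) ∉ Set.Ioo (0:ℝ) 1 ×ˢ Set.Ioo (-π) π := by
        intro h; exact hr h.1.2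
      have hnb : Complex.polarCoord.symm (r, φ) ∉ Metric.ball (0:ℂ) 1 := by
        simp only [Metric.mem_ball, Complex.dist_eq, sub_zero]
        rw [Complex.norm_polarCoord_symm, abs_of_pos hp.1]
        exact fun h => hr h
      rw [Set.indicator_of_notMem hnm, Set.indicator_of_notMem hnb, smul_zero]
  rw [setIntegral_congr_fun (polarCoord.open_target.measurableSet) h1,
    setIntegral_indicator (measurableSet_Ioo.prod measurableSet_Ioo),
    Set.inter_eq_self_of_subset_right S_subset_target]

lemma polar_ball_integrableOn (g : ℂ → ℝ)
    (hg : IntegrableOn g (Metric.ball (0:ℂ) 1) volume) :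
    IntegrableOn (fun p : ℝ × ℝ => p.1 * g (Complex.polarCoord.symm p))
      (Set.Ioo (0:ℝ) 1 ×ˢ Set.Ioo (-π) π) volume := by
  have hsymm : ∀ p : ℝ × ℝ, Complex.polarCoord.symm p
      = Complex.measurableEquivRealProd.symm (polarCoord.symm p) := by
    intro p
    apply Complex.ext <;>
      simp [Complex.measurableEquivRealProd_symm_apply, Complex.polarCoord_symm_apply,
        Complex.add_re, Complex.add_im, Complex.mul_re, Complex.mul_im,
        Complex.cos_ofReal_re, Complex.sin_ofReal_re]
  have hR : IntegrableOn (g ∘ Complex.measurableEquivRealProd.symm)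
      (Complex.measurableEquivRealProd '' Metric.ball (0:ℂ) 1) volume := by
    rw [Complex.volume_preserving_equiv_real_prod.integrableOn_image
      (MeasurableEquiv.measurableEmbedding _)]
    have : (g ∘ Complex.measurableEquivRealProd.symm) ∘ Complex.measurableEquivRealProd = g := by
      funext z; simp
    rwa [this]
  have himg : IntegrableOn (g ∘ Complex.measurableEquivRealProd.symm)
      (polarCoord.symm '' (Set.Ioo (0:ℝ) 1 ×ˢ Set.Ioo (-π) π)) volume := by
    apply hR.mono_set
    rintro x ⟨p, hp, rfl⟩
    refine ⟨Complex.polarCoord.symm p, symm_mem_ball hp, ?_⟩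
    rw [hsymm p]
    simp
  have B_det : ∀ p : ℝ × ℝ,
      (LinearMap.toContinuousLinearMap (Matrix.toLin (Module.Basis.finTwoProd ℝ) (Module.Basis.finTwoProd ℝ)
        !![Real.cos p.2, -p.1 * Real.sin p.2; Real.sin p.2, p.1 * Real.cos p.2])).det = p.1 := by
    intro p
    conv_rhs => rw [← one_mul p.1, ← Real.cos_sq_add_sin_sq p.2]
    simp only [neg_mul, LinearMap.det_toContinuousLinearMap, LinearMap.det_toLin,
      Matrix.det_fin_two_of, sub_neg_eq_add]
    ring
  have key := (integrableOn_image_iff_integrableOn_abs_det_fderiv_smul volume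
    (measurableSet_Ioo.prod measurableSet_Ioo)
    (fun p _ => (hasFDerivAt_polarCoord_symm p).hasFDerivWithinAt)
    (polarCoord.symm.injOn.mono S_subset_target)
    (g ∘ Complex.measurableEquivRealProd.symm)).mp himg
  apply (integrableOn_congr_fun ?_ (measurableSet_Ioo.prod measurableSet_Ioo)).mp key
  intro p hp
  simp only [Function.comp_apply]
  rw [det_fderivPolarCoordSymm, abs_of_pos hp.1.1, ← hsymm p, smul_eq_mul]

lemma polar_symm_exp (r φ : ℝ) :
    Complex.polarCoord.symm (r, φ) = (r : ℂ) * Complex.exp ((φ : ℂ) * Complex.I) := by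
  rw [Complex.polarCoord_symm_apply, Complex.exp_mul_I]
  norm_num [Complex.ofReal_cos, Complex.ofReal_sin]

/-- a.e. transfer of a null set of the disk to polar coordinates. -/
lemma ae_polar_notmem {Sset : Set ℂ} (hSm : MeasurableSet Sset) (hS0 : volume Sset = 0) :
    ∀ᵐ p ∂(volume.restrict (Set.Ioo (0:ℝ) 1 ×ˢ Set.Ioo (-π) π)),
      Complex.polarCoord.symm p ∉ Sset := by
  set f : ℂ → ℝ := Sset.indicator (fun _ => 1) with hf
  have hnm : ∀ᵐ z ∂(volume : Measure ℂ), z ∉ Sset :=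
    measure_eq_zero_iff_ae_notMem.mp hS0
  have hf0 : f =ᵐ[volume] 0 := by
    filter_upwards [hnm] with z hz
    simp [hf, Set.indicator_of_notMem hz]
  have hint_ball : IntegrableOn f (Metric.ball (0:ℂ) 1) volume :=
    ((integrable_zero _ _ _).congr (ae_restrict_of_ae hf0.symm))
  have hii := polar_ball_integrableOn f hint_ball
  have hzero : ∫ p in (Set.Ioo (0:ℝ) 1 ×ˢ Set.Ioo (-π) π),
      p.1 * f (Complex.polarCoord.symm p) = 0 := by
    rw [← polar_ball_integral]
    exact integral_eq_zero_of_ae (ae_restrict_of_ae hf0)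
  have hnn : 0 ≤ᵐ[volume.restrict (Set.Ioo (0:ℝ) 1 ×ˢ Set.Ioo (-π) π)]
      (fun p : ℝ × ℝ => p.1 * f (Complex.polarCoord.symm p)) := by
    filter_upwards [ae_restrict_mem (measurableSet_Ioo.prod measurableSet_Ioo)] with p hp
    exact mul_nonneg hp.1.1.le (Set.indicator_nonneg (fun _ _ => zero_le_one) _)
  have hae0 := (integral_eq_zero_iff_of_nonneg_ae hnn hii).mp hzero
  filter_upwards [hae0, ae_restrict_mem (measurableSet_Ioo.prod measurableSet_Ioo)]
    with p hp0 hpmem hmem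
  simp only [hf, Set.indicator_of_mem hmem, mul_one, Pi.zero_apply] at hp0
  exact absurd hp0 (ne_of_gt hpmem.1.1)

/-! ### Trigonometric computations -/

lemma im_ofReal_mul_exp (c θ : ℝ) :
    ((c : ℂ) * Complex.exp ((θ : ℂ) * Complex.I)).im = c * Real.sin θ := by
  simp [Complex.mul_im, Complex.exp_ofReal_mul_I_im, Complex.exp_ofReal_mul_I_re]

lemma polar_W_eval (i j : ℕ) (hi : 1 ≤ i) (hj : 1 ≤ j) (r φ : ℝ) :
    W i j ((r : ℂ) * Complex.exp ((φ : ℂ) * Complex.I))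
      = (i : ℝ) * j * (r ^ (i + j - 2) * Real.sin (((j : ℝ) - i) * φ)) := by
  rw [W]
  congr 1
  have h1 : (starRingEnd ℂ) ((r : ℂ) * Complex.exp ((φ : ℂ) * Complex.I))
      = (r : ℂ) * Complex.exp ((((-φ : ℝ)) : ℂ) * Complex.I) := by
    rw [map_mul, ← Complex.exp_conj]
    norm_num
  rw [h1, mul_pow, mul_pow, ← Complex.exp_nat_mul, ← Complex.exp_nat_mul,
    mul_mul_mul_comm, ← pow_add, show (i - 1) + (j - 1) = i + j - 2 by omega,
    ← Complex.exp_add]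
  have harg : (↑(i - 1 : ℕ) * ((((-φ : ℝ)) : ℂ) * Complex.I) +
      ↑(j - 1 : ℕ) * (((φ : ℝ) : ℂ) * Complex.I))
      = ((((j : ℝ) - i) * φ : ℝ) : ℂ) * Complex.I := by
    push_cast [Nat.cast_sub hi, Nat.cast_sub hj]
    ring
  rw [harg, ← Complex.ofReal_pow]
  exact im_ofReal_mul_exp _ _

lemma sin_sub_cast (i j : ℕ) (hne : i ≠ j) (x : ℝ) :
    Real.sin (((j : ℝ) - i) * x)
      = ((((j : ℤ) - i).sign : ℤ) : ℝ) * Real.sin ((((i : ℤ) - j).natAbs : ℝ) * x) := by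
  have h0 : ((j : ℤ) - i) ≠ 0 := by
    intro h; apply hne; omega
  have h1 : ((j : ℤ) - i) = ((j : ℤ) - i).sign * (((i : ℤ) - j).natAbs : ℤ) := by
    rw [show (((i : ℤ) - j).natAbs : ℤ) = (((j : ℤ) - i).natAbs : ℤ) by
      rw [← Int.natAbs_neg, neg_sub], Int.sign_mul_natAbs]
  have h2 : ((j : ℝ) - i) = (((j : ℤ) - i).sign : ℝ) * (((i : ℤ) - j).natAbs : ℝ) := by
    have := congrArg (fun t : ℤ => (t : ℝ)) h1
    push_cast [Nat.cast_natAbs] at this ⊢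
    linarith
  rw [h2]
  rcases lt_trichotomy ((j : ℤ) - i) 0 with h | h | h
  · rw [Int.sign_eq_neg_one_of_neg h]
    push_cast
    rw [neg_one_mul, neg_mul, Real.sin_neg, neg_one_mul]
  · exact absurd h h0
  · rw [Int.sign_eq_one_of_pos h]
    push_cast
    rw [one_mul, one_mul]

lemma periodic_aux (γ : ℂ → ℝ) (r : ℝ) (K : ℕ) :
    Function.Periodic
      (fun φ : ℝ => γ ((r : ℂ) * Complex.exp ((φ : ℂ) * Complex.I)) * Real.sin (K * φ))
      (2 * π) := by
  intro x
  have h1 : ((x + 2 * π : ℝ) : ℂ) * Complex.I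
      = (x : ℂ) * Complex.I + 2 * π * Complex.I := by
    push_cast; ring
  simp only [h1, Complex.exp_add, Complex.exp_two_pi_mul_I, mul_one]
  rw [show (K : ℝ) * (x + 2 * π) = K * x + K * (2 * π) by ring,
    Real.sin_add_nat_mul_two_pi]

/-- The key slice evaluation for `i ≠ j`. -/
lemma slice_eval (γ G : ℂ → ℝ) (i j : ℕ) (hi : 1 ≤ i) (hj : 1 ≤ j) (hne : i ≠ j)
    (r : ℝ) (hr : r ∈ Set.Ioo (0:ℝ) 1)
    (hae : ∀ᵐ (φ : ℝ) ∂((volume : Measure ℝ).restrict (Set.Ioo (-π) π)),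
      γ ((r : ℂ) * Complex.exp ((φ : ℂ) * Complex.I))
        = G ((r : ℂ) * Complex.exp ((φ : ℂ) * Complex.I))) :
    (∫ φ in Set.Ioo (-π) π,
        r * (G (Complex.polarCoord.symm (r, φ)) * W i j (Complex.polarCoord.symm (r, φ))))
      = ((i : ℝ) * j * π * ((((j : ℤ) - i).sign : ℤ) : ℝ)) *
          (r ^ (i + j - 1) * fourierSinCoeff γ ((i : ℤ) - j).natAbs r) := by
  set K : ℕ := ((i : ℤ) - j).natAbs with hK
  set sg : ℝ := ((((j : ℤ) - i).sign : ℤ) : ℝ) with hsg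
  have hKne : K ≠ 0 := by
    rw [hK]
    simp only [ne_eq, Int.natAbs_eq_zero, sub_eq_zero]
    intro h; apply hne; exact_mod_cast h
  have hrpow : r * r ^ (i + j - 2) = r ^ (i + j - 1) := by
    rw [← pow_succ']
    congr 1
    omega
  have hpt : ∀ φ : ℝ,
      r * (G (Complex.polarCoord.symm (r, φ)) * W i j (Complex.polarCoord.symm (r, φ)))
      = ((i : ℝ) * j * r ^ (i + j - 1) * sg) *
          (G ((r : ℂ) * Complex.exp ((φ : ℂ) * Complex.I)) * Real.sin (K * φ)) := by
    intro φ
    rw [polar_symm_exp, polar_W_eval i j hi hj, sin_sub_cast i j hne φ, ← hK, ← hsg]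
    rw [← hrpow]
    ring
  simp only [hpt]
  rw [integral_const_mul]
  have hcongr : ∫ φ in Set.Ioo (-π) π,
      G ((r : ℂ) * Complex.exp ((φ : ℂ) * Complex.I)) * Real.sin (K * φ)
      = ∫ φ in Set.Ioo (-π) π,
      γ ((r : ℂ) * Complex.exp ((φ : ℂ) * Complex.I)) * Real.sin (K * φ) := by
    apply integral_congr_ae
    filter_upwards [hae] with φ hφ
    rw [hφ]
  rw [hcongr]
  have hIoo : ∫ φ in Set.Ioo (-π) π,
      γ ((r : ℂ) * Complex.exp ((φ : ℂ) * Complex.I)) * Real.sin (K * φ)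
      = ∫ φ in (-π)..π,
      γ ((r : ℂ) * Complex.exp ((φ : ℂ) * Complex.I)) * Real.sin (K * φ) := by
    rw [intervalIntegral.integral_of_le (by linarith [Real.pi_pos]),
      integral_Ioc_eq_integral_Ioo]
  rw [hIoo]
  have hper := periodic_aux γ r K
  have hshift : (∫ φ in (-π)..π,
        γ ((r : ℂ) * Complex.exp ((φ : ℂ) * Complex.I)) * Real.sin (K * φ))
      = ∫ φ in (0:ℝ)..(2 * π),
        γ ((r : ℂ) * Complex.exp ((φ : ℂ) * Complex.I)) * Real.sin (K * φ) := by
    have := hper.intervalIntegral_add_eq (-π) 0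
    rw [show -π + 2 * π = π by ring, zero_add] at this
    exact this
  rw [hshift]
  have hfour : fourierSinCoeff γ K r = (1 / π) * ∫ φ in (0:ℝ)..(2 * π),
      γ ((r : ℂ) * Complex.exp ((φ : ℂ) * Complex.I)) * Real.sin (K * φ) := by
    rw [fourierSinCoeff, if_neg hKne]
    congr 1
    apply intervalIntegral.integral_congr
    intro φ _
    simp only [mul_comm Complex.I]
  rw [hfour]
  have hπ : (π : ℝ) ≠ 0 := Real.pi_ne_zero
  field_simp
  simp only [mul_comm Complex.I]

end LinearizedDtNAux

set_option maxHeartbeats 1000000 in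
open LinearizedDtNAux in
/-- for `γ ∈ L²` of the unit disk and `i, j ≥ 1`,
`∫_Ω γ ⟨∇Re(z^i), ∇Im(z^j)⟩ = i j π sign(j-i) ∫₀¹ r^{i+j-1} b_{|i-j|}(r) dr`. -/
theorem linearized_DtN_cos_sin (γ : ℂ → ℝ)
    (hγ : MemLp γ 2 (volume.restrict (Metric.ball (0:ℂ) 1)))
    (i j : ℕ) (hi : 1 ≤ i) (hj : 1 ≤ j) :
    (∫ z in Metric.ball (0:ℂ) 1,
        γ z * ⟪gradient (fun w : ℂ => (w ^ i).re) z,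
               gradient (fun w : ℂ => (w ^ j).im) z⟫)
      = (i : ℝ) * j * π * (((j : ℤ) - i).sign : ℝ) *
          ∫ r in (0:ℝ)..1, r ^ (i + j - 1) * fourierSinCoeff γ ((i : ℤ) - j).natAbs r := by
  have hgr : ∀ z : ℂ,
      γ z * ⟪gradient (fun w : ℂ => (w ^ i).re) z, gradient (fun w : ℂ => (w ^ j).im) z⟫
      = γ z * W i j z := fun z => by rw [grad_inner_eq]
  simp only [hgr]
  rcases eq_or_ne i j with rfl | hne
  · -- diagonal case: both sides vanish
    have hW : ∀ z : ℂ, W i i z = 0 := by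
      intro z
      rw [W, ← mul_pow, Complex.conj_mul', ← Complex.ofReal_pow, ← Complex.ofReal_pow,
        Complex.ofReal_im, mul_zero]
    simp only [hW, mul_zero, integral_zero, sub_self, Int.sign_zero, Int.cast_zero]
    ring
  · -- off-diagonal case
    -- measurable representative
    obtain ⟨G, -, haeGγ⟩ := hγ.1
    -- integrability of γ • W on the ball
    haveI : IsFiniteMeasure (volume.restrict (Metric.ball (0:ℂ) 1)) :=
      ⟨by rw [Measure.restrict_apply_univ]; exact measure_ball_lt_top⟩
    have hγint : Integrable γ (volume.restrict (Metric.ball (0:ℂ) 1)) :=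
      hγ.integrable (by norm_num)
    have hWc : Continuous (W i j) := by
      apply Continuous.mul continuous_const
      exact Complex.continuous_im.comp
        (((Complex.continuous_conj.pow _).mul (continuous_pow _)).comp continuous_id)
    have hWbd : ∀ᵐ z ∂(volume.restrict (Metric.ball (0:ℂ) 1)),
        ‖W i j z‖ ≤ (i : ℝ) * j := by
      filter_upwards [ae_restrict_mem Metric.isOpen_ball.measurableSet] with z hz
      have hz1 : ‖z‖ ≤ 1 := by
        simp only [Metric.mem_ball, Complex.dist_eq, sub_zero] at hz
        exact hz.le
      have h1 : |(((starRingEnd ℂ) z) ^ (i - 1) * z ^ (j - 1)).im| ≤ 1 := by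
        refine le_trans (Complex.abs_im_le_norm _) ?_
        rw [norm_mul, norm_pow, norm_pow, Complex.norm_conj]
        exact mul_le_one₀ (pow_le_one₀ (norm_nonneg z) hz1)
          (pow_nonneg (norm_nonneg z) _) (pow_le_one₀ (norm_nonneg z) hz1)
      rw [W, Real.norm_eq_abs, abs_mul, abs_mul]
      calc |(i:ℝ)| * |(j:ℝ)| * |(((starRingEnd ℂ) z) ^ (i - 1) * z ^ (j - 1)).im|
          ≤ |(i:ℝ)| * |(j:ℝ)| * 1 :=
            mul_le_mul_of_nonneg_left h1 (by positivity)
        _ = (i : ℝ) * j := by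
            rw [mul_one, abs_of_nonneg (by positivity), abs_of_nonneg (by positivity)]
    have hγW : Integrable (fun z => γ z * W i j z)
        (volume.restrict (Metric.ball (0:ℂ) 1)) := by
      have := hγint.bdd_mul (c := (i : ℝ) * j)
        (hWc.aestronglyMeasurable) hWbd
      exact this.congr (Filter.Eventually.of_forall fun z => mul_comm _ _)
    have hGW : Integrable (fun z => G z * W i j z)
        (volume.restrict (Metric.ball (0:ℂ) 1)) :=
      by
        apply hγW.congr
        filter_upwards [haeGγ] with z hz
        rw [hz]
    -- null set transfer
    have hnull := ae_iff.mp haeGγ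
    obtain ⟨U, hTU, hUm, hU0⟩ := exists_measurable_superset_of_null hnull
    have hU0' : volume (U ∩ Metric.ball (0:ℂ) 1) = 0 := by
      rw [Measure.restrict_apply hUm] at hU0
      exact hU0
    have haepp := ae_polar_notmem (hUm.inter Metric.isOpen_ball.measurableSet) hU0'
    have hprod : (volume : Measure (ℝ × ℝ)).restrict (Set.Ioo (0:ℝ) 1 ×ˢ Set.Ioo (-π) π)
        = ((volume : Measure ℝ).restrict (Set.Ioo (0:ℝ) 1)).prod
            ((volume : Measure ℝ).restrict (Set.Ioo (-π) π)) := by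
      rw [Measure.prod_restrict, ← Measure.volume_eq_prod]
    rw [hprod] at haepp
    have hslices := Measure.ae_ae_of_ae_prod haepp
    -- the slice computation, a.e. in r
    have hslice : ∀ᵐ r ∂((volume : Measure ℝ).restrict (Set.Ioo (0:ℝ) 1)),
        (∫ φ in Set.Ioo (-π) π,
            r * (G (Complex.polarCoord.symm (r, φ)) * W i j (Complex.polarCoord.symm (r, φ))))
        = ((i : ℝ) * j * π * ((((j : ℤ) - i).sign : ℤ) : ℝ)) *
            (r ^ (i + j - 1) * fourierSinCoeff γ ((i : ℤ) - j).natAbs r) := by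
      filter_upwards [hslices, ae_restrict_mem measurableSet_Ioo] with r hrae hrmem
      apply slice_eval γ G i j hi hj hne r hrmem
      filter_upwards [hrae, ae_restrict_mem measurableSet_Ioo] with φ hφ hφmem
      by_contra hnot
      apply hφ
      rw [polar_symm_exp]
      constructor
      · exact hTU hnot
      · have : ‖(r : ℂ) * Complex.exp ((φ : ℂ) * Complex.I)‖ = r := by
          rw [norm_mul, Complex.norm_exp_ofReal_mul_I, mul_one, Complex.norm_real, Real.norm_eq_abs,
            abs_of_pos hrmem.1]
        simp only [Metric.mem_ball, Complex.dist_eq, sub_zero, this]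
        exact hrmem.2
    -- put everything together
    calc ∫ z in Metric.ball (0:ℂ) 1, γ z * W i j z
        = ∫ z in Metric.ball (0:ℂ) 1, G z * W i j z := by
          apply integral_congr_ae
          filter_upwards [haeGγ] with z hz
          rw [hz]
      _ = ∫ p in (Set.Ioo (0:ℝ) 1 ×ˢ Set.Ioo (-π) π),
            p.1 * (G (Complex.polarCoord.symm p) * W i j (Complex.polarCoord.symm p)) :=
          polar_ball_integral (fun z => G z * W i j z)
      _ = ∫ r in Set.Ioo (0:ℝ) 1, ∫ φ in Set.Ioo (-π) π,
            r * (G (Complex.polarCoord.symm (r, φ)) * W i j (Complex.polarCoord.symm (r, φ))) := by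
          have hint2 : Integrable
              (fun p : ℝ × ℝ => p.1 *
                (G (Complex.polarCoord.symm p) * W i j (Complex.polarCoord.symm p)))
              (((volume : Measure ℝ).restrict (Set.Ioo (0:ℝ) 1)).prod
                ((volume : Measure ℝ).restrict (Set.Ioo (-π) π))) := by
            rw [← hprod]
            exact polar_ball_integrableOn (fun z => G z * W i j z) hGW
          rw [hprod]
          exact integral_prod (fun p : ℝ × ℝ => p.1 *
            (G (Complex.polarCoord.symm p) * W i j (Complex.polarCoord.symm p))) hint2
      _ = ∫ r in Set.Ioo (0:ℝ) 1,
            ((i : ℝ) * j * π * ((((j : ℤ) - i).sign : ℤ) : ℝ)) *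
              (r ^ (i + j - 1) * fourierSinCoeff γ ((i : ℤ) - j).natAbs r) :=
          integral_congr_ae hslice
      _ = ((i : ℝ) * j * π * ((((j : ℤ) - i).sign : ℤ) : ℝ)) *
            ∫ r in Set.Ioo (0:ℝ) 1,
              r ^ (i + j - 1) * fourierSinCoeff γ ((i : ℤ) - j).natAbs r :=
          integral_const_mul _ _
      _ = (i : ℝ) * j * π * (((j : ℤ) - i).sign : ℝ) *
            ∫ r in (0:ℝ)..1, r ^ (i + j - 1) * fourierSinCoeff γ ((i : ℤ) - j).natAbs r := by
          rw [intervalIntegral.integral_of_le zero_le_one, integral_Ioc_eq_integral_Ioo]
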